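/- Let a, b ≥ 1 be integers and let L = ([0, a+1] × [0,1]) ∪ ([0,1] × [0, b+1]) ⊆ ℝ² (the region of an L-shaped polyomino consisting of one HV-square with a horizontal appendage of length a and a vertical appendage of length b). Then there exists a similarity σ of ℝ² of ratio 1/√2 such that L folds to two levels onto σ(L). -/

import Mathlib

open MeasureTheory
open scoped Classical

noncomputable section

/-- The Euclidean plane ℝ². -/
abbrev Plane := EuclideanSpace ℝ (Fin 2)

/-- `P` folds to two levels onto `T` via the pieces `A i` and isometries `g i`:
the pieces are measurable, pairwise disjoint up to measure zero, their union is `P`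
up to measure zero, and for a.e. point `x` the number of indices `i` with
`x ∈ g i '' A i` is `2` if `x ∈ T` and `0` otherwise. -/
def IsFoldingData {k : ℕ} (A : Fin k → Set Plane) (g : Fin k → (Plane ≃ᵢ Plane))
    (P T : Set Plane) : Prop :=
  (∀ i, MeasurableSet (A i)) ∧
  (∀ i j, i ≠ j → volume (A i ∩ A j) = 0) ∧
  volume (symmDiff (⋃ i, A i) P) = 0 ∧
  ∀ᵐ x : Plane, ((Finset.univ.filter (fun i => x ∈ g i '' A i)).card : ℕ)
      = if x ∈ T then 2 else 0

/-- `P` folds to two levels onto `T`. -/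
def FoldsToTwoLevels (P T : Set Plane) : Prop :=
  ∃ (k : ℕ) (A : Fin k → Set Plane) (g : Fin k → (Plane ≃ᵢ Plane)),
    IsFoldingData A g P T

/-- `P` folds to two levels onto `T` without cuts: in addition there is a continuous
map `f` on `P` agreeing with `g i` on each piece `A i`. -/
def FoldsToTwoLevelsWithoutCuts (P T : Set Plane) : Prop :=
  ∃ (k : ℕ) (A : Fin k → Set Plane) (g : Fin k → (Plane ≃ᵢ Plane)),
    IsFoldingData A g P T ∧
    ∃ f : Plane → Plane, ContinuousOn f P ∧ ∀ i, ∀ x ∈ A i, f x = g i x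

/-- A similarity of ratio `r`. -/
def IsSimilarity (σ : Plane → Plane) (r : ℝ) : Prop :=
  ∀ x y, dist (σ x) (σ y) = r * dist x y

/-- The axis-aligned closed rectangle `[a,b] × [c,d]` in the plane. -/
def rect (a b c d : ℝ) : Set Plane :=
  {p | a ≤ p 0 ∧ p 0 ≤ b ∧ c ≤ p 1 ∧ p 1 ≤ d}

noncomputable def pt (u v : ℝ) : Plane := WithLp.toLp 2 ![u, v]
@[simp] lemma pt0 (u v : ℝ) : pt u v 0 = u := rfl
@[simp] lemma pt1 (u v : ℝ) : pt u v 1 = v := rfl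
lemma pt_eta (x : Plane) : pt (x 0) (x 1) = x := by
  ext i; fin_cases i <;> rfl
lemma dist_pt (x y : Plane) :
    dist x y = Real.sqrt ((x 0 - y 0)^2 + (x 1 - y 1)^2) := by
  rw [EuclideanSpace.dist_eq, Fin.sum_univ_two]
  simp [Real.dist_eq, sq_abs]

noncomputable def trIso (p q : ℝ) : Plane ≃ᵢ Plane where
  toFun x := pt (x 0 + p) (x 1 + q)
  invFun x := pt (x 0 - p) (x 1 - q)
  left_inv x := by rw [← pt_eta x]; simp
  right_inv x := by rw [← pt_eta x]; simp
  isometry_toFun := by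
    intro x y; simp only [edist_dist]; rw [dist_pt, dist_pt]
    simp only [pt0, pt1]; ring_nf

noncomputable def raIso (d1 d2 : ℝ) : Plane ≃ᵢ Plane where
  toFun x := pt (d1 - x 1) (d2 - x 0)
  invFun x := pt (d2 - x 1) (d1 - x 0)
  left_inv x := by rw [← pt_eta x]; simp
  right_inv x := by rw [← pt_eta x]; simp
  isometry_toFun := by
    intro x y; simp only [edist_dist]; rw [dist_pt, dist_pt]
    simp only [pt0, pt1]; ring_nf

noncomputable def rbIso (e1 e2 : ℝ) : Plane ≃ᵢ Plane where
  toFun x := pt (x 1 + e1) (x 0 + e2)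
  invFun x := pt (x 1 - e2) (x 0 - e1)
  left_inv x := by rw [← pt_eta x]; simp
  right_inv x := by rw [← pt_eta x]; simp
  isometry_toFun := by
    intro x y; simp only [edist_dist]; rw [dist_pt, dist_pt]
    simp only [pt0, pt1]; ring_nf

@[simp] lemma trIso_symm_apply (p q : ℝ) (x : Plane) :
    (trIso p q).symm x = pt (x 0 - p) (x 1 - q) := rfl
@[simp] lemma raIso_symm_apply (d1 d2 : ℝ) (x : Plane) :
    (raIso d1 d2).symm x = pt (d2 - x 1) (d1 - x 0) := rfl
@[simp] lemma rbIso_symm_apply (e1 e2 : ℝ) (x : Plane) :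
    (rbIso e1 e2).symm x = pt (x 1 - e2) (x 0 - e1) := rfl

lemma mem_image_iso (g : Plane ≃ᵢ Plane) (A : Set Plane) (x : Plane) :
    x ∈ g '' A ↔ g.symm x ∈ A := by
  constructor
  · rintro ⟨y, hy, rfl⟩; simpa using hy
  · intro h; exact ⟨g.symm x, h, by simp⟩

noncomputable def lf (α β : ℝ) : Plane →ₗ[ℝ] ℝ where
  toFun x := α * x 0 + β * x 1
  map_add' x y := by simp [PiLp.add_apply]; ring
  map_smul' r x := by simp [PiLp.smul_apply, smul_eq_mul]; ring

lemma line_null (α β c : ℝ) (h : α ≠ 0 ∨ β ≠ 0) :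
    volume {x : Plane | α * x 0 + β * x 1 = c} = 0 := by
  obtain ⟨x₀, hx₀⟩ : ∃ x₀ : Plane, α * x₀ 0 + β * x₀ 1 = c := by
    rcases h with h | h
    · exact ⟨pt (c/α) 0, by simp only [pt0, pt1]; field_simp; ring⟩
    · exact ⟨pt 0 (c/β), by simp only [pt0, pt1]; field_simp; ring⟩
  have hset : {x : Plane | α * x 0 + β * x 1 = c}
      = ↑(AffineSubspace.mk' x₀ (LinearMap.ker (lf α β))) := by
    ext x
    simp only [Set.mem_setOf_eq, AffineSubspace.mem_coe,
      AffineSubspace.mem_mk', LinearMap.mem_ker, vsub_eq_sub]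
    constructor
    · intro hx
      show α * (x - x₀) 0 + β * (x - x₀) 1 = 0
      simp [PiLp.sub_apply]; linarith
    · intro hx
      have : α * (x - x₀) 0 + β * (x - x₀) 1 = 0 := hx
      simp [PiLp.sub_apply] at this; linarith
  rw [hset]
  apply Measure.addHaar_affineSubspace
  intro htop
  have hdir : (AffineSubspace.mk' x₀ (LinearMap.ker (lf α β))).direction = ⊤ := by
    rw [htop]; exact AffineSubspace.direction_top ℝ _ _
  rw [AffineSubspace.direction_mk'] at hdir
  have hker := LinearMap.ker_eq_top.mp hdir
  rcases h with h | h
  · have : lf α β (pt 1 0) = 0 := by rw [hker]; rfl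
    simp [lf] at this; exact h this
  · have : lf α β (pt 0 1) = 0 := by rw [hker]; rfl
    simp [lf] at this; exact h this

/-! ### Pieces of a unit square at integer position (p,q) -/

def sqM (p q : ℝ) : Set Plane :=
  {x | p+q+1/2 ≤ x 0 + x 1 ∧ x 0 + x 1 < p+q+3/2 ∧ p-q-1/2 < x 0 - x 1 ∧ x 0 - x 1 ≤ p-q+1/2}
def sqLL (p q : ℝ) : Set Plane :=
  {x | p ≤ x 0 ∧ x 0 < p+1 ∧ q ≤ x 1 ∧ x 0 + x 1 < p+q+1/2}
def sqUR (p q : ℝ) : Set Plane :=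
  {x | p ≤ x 0 ∧ x 0 < p+1 ∧ x 1 < q+1 ∧ p+q+3/2 ≤ x 0 + x 1}
def sqLR (p q : ℝ) : Set Plane :=
  {x | x 0 < p+1 ∧ q ≤ x 1 ∧ x 1 < q+1 ∧ p-q+1/2 < x 0 - x 1}
def sqUL (p q : ℝ) : Set Plane :=
  {x | p ≤ x 0 ∧ q ≤ x 1 ∧ x 1 < q+1 ∧ x 0 - x 1 ≤ p-q-1/2}
def halfSq (p q : ℝ) : Set Plane :=
  {x | p ≤ x 0 ∧ x 0 < p+1 ∧ q ≤ x 1 ∧ x 1 < q+1}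

def pieces (p q : ℝ) : Fin 5 → Set Plane
  | 0 => sqM p q
  | 1 => sqLL p q
  | 2 => sqUR p q
  | 3 => sqLR p q
  | 4 => sqUL p q

noncomputable def isos (p q : ℝ) : Fin 5 → (Plane ≃ᵢ Plane)
  | 0 => trIso (-(p+q+1)/2) ((p-q)/2)
  | 1 => raIso ((p+q+1/2) + -(p+q+1)/2) ((p+q+1/2) + (p-q)/2)
  | 2 => raIso ((p+q+3/2) + -(p+q+1)/2) ((p+q+3/2) + (p-q)/2)
  | 3 => rbIso ((p-q+1/2) + -(p+q+1)/2) (-(p-q+1/2) + (p-q)/2)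
  | 4 => rbIso ((p-q-1/2) + -(p+q+1)/2) (-(p-q-1/2) + (p-q)/2)

@[simp] lemma pieces0 (p q : ℝ) : pieces p q 0 = sqM p q := rfl
@[simp] lemma pieces1 (p q : ℝ) : pieces p q 1 = sqLL p q := rfl
@[simp] lemma pieces2 (p q : ℝ) : pieces p q 2 = sqUR p q := rfl
@[simp] lemma pieces3 (p q : ℝ) : pieces p q 3 = sqLR p q := rfl
@[simp] lemma pieces4 (p q : ℝ) : pieces p q 4 = sqUL p q := rfl

lemma pieces_subset (p q : ℝ) (s : Fin 5) : pieces p q s ⊆ halfSq p q := by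
  fin_cases s <;> rintro x ⟨h1, h2, h3, h4⟩ <;>
    exact ⟨by linarith, by linarith, by linarith, by linarith⟩

lemma pieces_cover (p q : ℝ) (x : Plane) (hx : x ∈ halfSq p q) :
    ∃ s : Fin 5, x ∈ pieces p q s := by
  obtain ⟨h1, h2, h3, h4⟩ := hx
  by_cases c1 : x 0 + x 1 < p+q+1/2
  · exact ⟨1, h1, h2, h3, c1⟩
  by_cases c2 : p+q+3/2 ≤ x 0 + x 1
  · exact ⟨2, h1, h2, h4, c2⟩
  by_cases c3 : p-q+1/2 < x 0 - x 1
  · exact ⟨3, h2, h3, h4, c3⟩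
  by_cases c4 : x 0 - x 1 ≤ p-q-1/2
  · exact ⟨4, h1, h3, h4, c4⟩
  push_neg at c1 c2 c3 c4
  exact ⟨0, by linarith, by linarith, by linarith, by linarith⟩

lemma pieces_disj (p q : ℝ) (s t : Fin 5) (hst : s ≠ t) (x : Plane)
    (hs : x ∈ pieces p q s) (ht : x ∈ pieces p q t) : False := by
  fin_cases s <;> fin_cases t <;>
    first
      | exact hst rfl
      | (obtain ⟨h1, h2, h3, h4⟩ := hs; obtain ⟨g1, g2, g3, g4⟩ := ht; linarith)

lemma square_count (m n : ℤ) (x : Plane)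
    (h0 : ∀ k : ℤ, 2 * x 0 ≠ (k:ℝ)) (h1 : ∀ k : ℤ, 2 * x 1 ≠ (k:ℝ))
    (hS : ∀ k : ℤ, 2 * (x 0 + x 1) ≠ (k:ℝ)) (hD : ∀ k : ℤ, 2 * (x 1 - x 0) ≠ (k:ℝ)) :
    (∑ s : Fin 5, if x ∈ (isos (m:ℝ) (n:ℝ) s) '' (pieces (m:ℝ) (n:ℝ) s) then 1 else 0)
      = if ((m:ℝ) < x 0 + x 1 ∧ x 0 + x 1 < (m:ℝ)+1 ∧ (n:ℝ) < x 1 - x 0 ∧ x 1 - x 0 < (n:ℝ)+1)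
        then 2 else 0 := by
  have e1 : x 0 ≠ ((m:ℝ) - n)/2 := fun h => h0 (m - n) (by push_cast; linarith)
  have e2 : x 1 ≠ ((m:ℝ) + n + 1)/2 := fun h => h1 (m + n + 1) (by push_cast; linarith)
  have e3 : x 0 + x 1 ≠ (m:ℝ) := fun h => hS (2*m) (by push_cast; linarith)
  have e4 : x 0 + x 1 ≠ (m:ℝ)+1 := fun h => hS (2*m+2) (by push_cast; linarith)
  have e5 : x 1 - x 0 ≠ (n:ℝ) := fun h => hD (2*n) (by push_cast; linarith)
  have e6 : x 1 - x 0 ≠ (n:ℝ)+1 := fun h => hD (2*n+2) (by push_cast; linarith)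
  have hm0 : x ∈ (isos (m:ℝ) (n:ℝ) 0) '' (pieces (m:ℝ) (n:ℝ) 0) ↔
      ((m:ℝ) < x 0 + x 1 ∧ x 0 + x 1 < (m:ℝ)+1 ∧ (n:ℝ) < x 1 - x 0 ∧ x 1 - x 0 < (n:ℝ)+1) := by
    rw [pieces0, show isos (m:ℝ) (n:ℝ) 0 = trIso (-((m:ℝ)+n+1)/2) (((m:ℝ)-n)/2) from rfl,
      mem_image_iso, trIso_symm_apply]
    simp only [sqM, Set.mem_setOf_eq, pt0, pt1]
    constructor
    · rintro ⟨h1, h2, h3, h4⟩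
      exact ⟨lt_of_le_of_ne (by linarith) (fun h => e3 h.symm), by linarith,
        lt_of_le_of_ne (by linarith) (fun h => e5 h.symm), by linarith⟩
    · rintro ⟨h1, h2, h3, h4⟩
      exact ⟨by linarith, by linarith, by linarith, by linarith⟩
  have hm1 : x ∈ (isos (m:ℝ) (n:ℝ) 1) '' (pieces (m:ℝ) (n:ℝ) 1) ↔
      (x 0 < ((m:ℝ)-n)/2 ∧ x 1 < ((m:ℝ)+n+1)/2 ∧ (m:ℝ) < x 0 + x 1) := by
    rw [pieces1, show isos (m:ℝ) (n:ℝ) 1 =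
        raIso (((m:ℝ)+n+1/2) + -((m:ℝ)+n+1)/2) (((m:ℝ)+n+1/2) + ((m:ℝ)-n)/2) from rfl,
      mem_image_iso, raIso_symm_apply]
    simp only [sqLL, Set.mem_setOf_eq, pt0, pt1]
    constructor
    · rintro ⟨h1, h2, h3, h4⟩
      exact ⟨lt_of_le_of_ne (by linarith) e1, lt_of_le_of_ne (by linarith) e2, by linarith⟩
    · rintro ⟨h1, h2, h3⟩
      exact ⟨by linarith, by linarith, by linarith, by linarith⟩
  have hm2 : x ∈ (isos (m:ℝ) (n:ℝ) 2) '' (pieces (m:ℝ) (n:ℝ) 2) ↔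
      (((m:ℝ)-n)/2 < x 0 ∧ ((m:ℝ)+n+1)/2 < x 1 ∧ x 0 + x 1 < (m:ℝ)+1) := by
    rw [pieces2, show isos (m:ℝ) (n:ℝ) 2 =
        raIso (((m:ℝ)+n+3/2) + -((m:ℝ)+n+1)/2) (((m:ℝ)+n+3/2) + ((m:ℝ)-n)/2) from rfl,
      mem_image_iso, raIso_symm_apply]
    simp only [sqUR, Set.mem_setOf_eq, pt0, pt1]
    constructor
    · rintro ⟨h1, h2, h3, h4⟩
      exact ⟨by linarith, by linarith,
        lt_of_le_of_ne (by linarith) e4⟩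
    · rintro ⟨h1, h2, h3⟩
      exact ⟨by linarith, by linarith, by linarith, by linarith⟩
  have hm3 : x ∈ (isos (m:ℝ) (n:ℝ) 3) '' (pieces (m:ℝ) (n:ℝ) 3) ↔
      (((m:ℝ)-n)/2 < x 0 ∧ x 1 < ((m:ℝ)+n+1)/2 ∧ (n:ℝ) < x 1 - x 0) := by
    rw [pieces3, show isos (m:ℝ) (n:ℝ) 3 =
        rbIso (((m:ℝ)-n+1/2) + -((m:ℝ)+n+1)/2) (-((m:ℝ)-n+1/2) + ((m:ℝ)-n)/2) from rfl,
      mem_image_iso, rbIso_symm_apply]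
    simp only [sqLR, Set.mem_setOf_eq, pt0, pt1]
    constructor
    · rintro ⟨h1, h2, h3, h4⟩
      exact ⟨lt_of_le_of_ne (by linarith) (fun h => e1 h.symm), by linarith, by linarith⟩
    · rintro ⟨h1, h2, h3⟩
      exact ⟨by linarith, by linarith, by linarith, by linarith⟩
  have hm4 : x ∈ (isos (m:ℝ) (n:ℝ) 4) '' (pieces (m:ℝ) (n:ℝ) 4) ↔
      (x 0 < ((m:ℝ)-n)/2 ∧ ((m:ℝ)+n+1)/2 < x 1 ∧ x 1 - x 0 < (n:ℝ)+1) := by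
    rw [pieces4, show isos (m:ℝ) (n:ℝ) 4 =
        rbIso (((m:ℝ)-n-1/2) + -((m:ℝ)+n+1)/2) (-((m:ℝ)-n-1/2) + ((m:ℝ)-n)/2) from rfl,
      mem_image_iso, rbIso_symm_apply]
    simp only [sqUL, Set.mem_setOf_eq, pt0, pt1]
    constructor
    · rintro ⟨h1, h2, h3, h4⟩
      exact ⟨by linarith, lt_of_le_of_ne (by linarith) (fun h => e2 h.symm),
        lt_of_le_of_ne (by linarith) e6⟩
    · rintro ⟨h1, h2, h3⟩
      exact ⟨by linarith, by linarith, by linarith, by linarith⟩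
  rw [Fin.sum_univ_five]
  simp only [hm0, hm1, hm2, hm3, hm4]
  set cx := ((m:ℝ)-n)/2 with hcx
  set cy := ((m:ℝ)+n+1)/2 with hcy
  by_cases hR : ((m:ℝ) < x 0 + x 1 ∧ x 0 + x 1 < (m:ℝ)+1 ∧ (n:ℝ) < x 1 - x 0 ∧ x 1 - x 0 < (n:ℝ)+1)
  · obtain ⟨r1, r2, r3, r4⟩ := hR
    have hR' : ((m:ℝ) < x 0 + x 1 ∧ x 0 + x 1 < (m:ℝ)+1 ∧ (n:ℝ) < x 1 - x 0 ∧ x 1 - x 0 < (n:ℝ)+1) := ⟨r1, r2, r3, r4⟩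
    rw [if_pos hR', if_pos hR']
    rcases lt_or_gt_of_ne e1 with h | h <;> rcases lt_or_gt_of_ne e2 with h' | h'
    · have t1 : (x 0 < cx ∧ x 1 < cy ∧ (m:ℝ) < x 0 + x 1) := ⟨h, h', r1⟩
      have f2 : ¬(cx < x 0 ∧ cy < x 1 ∧ x 0 + x 1 < (m:ℝ)+1) := fun hc => lt_asymm h hc.1
      have f3 : ¬(cx < x 0 ∧ x 1 < cy ∧ (n:ℝ) < x 1 - x 0) := fun hc => lt_asymm h hc.1
      have f4 : ¬(x 0 < cx ∧ cy < x 1 ∧ x 1 - x 0 < (n:ℝ)+1) := fun hc => lt_asymm h' hc.2.1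
      rw [if_pos t1, if_neg f2, if_neg f3, if_neg f4]
    · have t4 : (x 0 < cx ∧ cy < x 1 ∧ x 1 - x 0 < (n:ℝ)+1) := ⟨h, h', r4⟩
      have f1 : ¬(x 0 < cx ∧ x 1 < cy ∧ (m:ℝ) < x 0 + x 1) := fun hc => lt_asymm h' hc.2.1
      have f2 : ¬(cx < x 0 ∧ cy < x 1 ∧ x 0 + x 1 < (m:ℝ)+1) := fun hc => lt_asymm h hc.1
      have f3 : ¬(cx < x 0 ∧ x 1 < cy ∧ (n:ℝ) < x 1 - x 0) := fun hc => lt_asymm h hc.1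
      rw [if_neg f1, if_neg f2, if_neg f3, if_pos t4]
    · have t3 : (cx < x 0 ∧ x 1 < cy ∧ (n:ℝ) < x 1 - x 0) := ⟨h, h', r3⟩
      have f1 : ¬(x 0 < cx ∧ x 1 < cy ∧ (m:ℝ) < x 0 + x 1) := fun hc => lt_asymm h hc.1
      have f2 : ¬(cx < x 0 ∧ cy < x 1 ∧ x 0 + x 1 < (m:ℝ)+1) := fun hc => lt_asymm h' hc.2.1
      have f4 : ¬(x 0 < cx ∧ cy < x 1 ∧ x 1 - x 0 < (n:ℝ)+1) := fun hc => lt_asymm h hc.1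
      rw [if_neg f1, if_neg f2, if_pos t3, if_neg f4]
    · have t2 : (cx < x 0 ∧ cy < x 1 ∧ x 0 + x 1 < (m:ℝ)+1) := ⟨h, h', r2⟩
      have f1 : ¬(x 0 < cx ∧ x 1 < cy ∧ (m:ℝ) < x 0 + x 1) := fun hc => lt_asymm h hc.1
      have f3 : ¬(cx < x 0 ∧ x 1 < cy ∧ (n:ℝ) < x 1 - x 0) := fun hc => lt_asymm h' hc.2.1
      have f4 : ¬(x 0 < cx ∧ cy < x 1 ∧ x 1 - x 0 < (n:ℝ)+1) := fun hc => lt_asymm h hc.1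
      rw [if_neg f1, if_pos t2, if_neg f3, if_neg f4]
  · have f1 : ¬(x 0 < cx ∧ x 1 < cy ∧ (m:ℝ) < x 0 + x 1) := by
      rintro ⟨hc1, hc2, hc3⟩
      rw [hcx] at hc1; rw [hcy] at hc2
      exact hR ⟨hc3, by linarith, by linarith, by linarith⟩
    have f2 : ¬(cx < x 0 ∧ cy < x 1 ∧ x 0 + x 1 < (m:ℝ)+1) := by
      rintro ⟨hc1, hc2, hc3⟩
      rw [hcx] at hc1; rw [hcy] at hc2
      exact hR ⟨by linarith, hc3, by linarith, by linarith⟩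
    have f3 : ¬(cx < x 0 ∧ x 1 < cy ∧ (n:ℝ) < x 1 - x 0) := by
      rintro ⟨hc1, hc2, hc3⟩
      rw [hcx] at hc1; rw [hcy] at hc2
      exact hR ⟨by linarith, by linarith, hc3, by linarith⟩
    have f4 : ¬(x 0 < cx ∧ cy < x 1 ∧ x 1 - x 0 < (n:ℝ)+1) := by
      rintro ⟨hc1, hc2, hc3⟩
      rw [hcx] at hc1; rw [hcy] at hc2
      exact hR ⟨by linarith, by linarith, by linarith, hc3⟩
    rw [if_neg hR, if_neg hR, if_neg f1, if_neg f2, if_neg f3, if_neg f4]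

/-! ### Indexing the squares of the L-shape -/

def pz (a : ℕ) (k : ℕ) : ℤ × ℤ := if k ≤ a then ((k:ℤ), 0) else (0, (k:ℤ) - a)

lemma pz_inj (a : ℕ) (i j : ℕ) (h : pz a i = pz a j) : i = j := by
  unfold pz at h
  split_ifs at h <;> simp [Prod.ext_iff] at h <;> omega

lemma pz_range (a b : ℕ) (k : ℕ) (hk : k < a+b+1) :
    (0 ≤ (pz a k).1 ∧ (pz a k).1 ≤ a ∧ (pz a k).2 = 0) ∨
    ((pz a k).1 = 0 ∧ 1 ≤ (pz a k).2 ∧ (pz a k).2 ≤ b) := by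
  unfold pz; split_ifs with h <;> simp <;> omega

lemma pz_mem (a b : ℕ) (m n : ℤ)
    (h : (0 ≤ m ∧ m ≤ a ∧ n = 0) ∨ (m = 0 ∧ 1 ≤ n ∧ n ≤ b)) :
    ∃ k : ℕ, k < a+b+1 ∧ pz a k = (m, n) := by
  rcases h with ⟨h1, h2, h3⟩ | ⟨h1, h2, h3⟩
  · refine ⟨m.toNat, by omega, ?_⟩
    unfold pz; rw [if_pos (by omega)]; simp [Prod.ext_iff]; omega
  · refine ⟨a + n.toNat, by omega, ?_⟩
    unfold pz; rw [if_neg (by omega)]; simp [Prod.ext_iff]; omega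

lemma pieces_meas (p q : ℝ) (s : Fin 5) : MeasurableSet (pieces p q s) := by
  have m0 : Measurable fun x : Plane => x 0 := (EuclideanSpace.proj (0:Fin 2) : Plane →L[ℝ] ℝ).continuous.measurable
  have m1 : Measurable fun x : Plane => x 1 := (EuclideanSpace.proj (1:Fin 2) : Plane →L[ℝ] ℝ).continuous.measurable
  have ms : Measurable fun x : Plane => x 0 + x 1 := m0.add m1
  have md : Measurable fun x : Plane => x 0 - x 1 := m0.sub m1
  fin_cases s
  · exact (measurableSet_le measurable_const ms).inter ((measurableSet_lt ms measurable_const).inter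
      ((measurableSet_lt measurable_const md).inter (measurableSet_le md measurable_const)))
  · exact (measurableSet_le measurable_const m0).inter ((measurableSet_lt m0 measurable_const).inter
      ((measurableSet_le measurable_const m1).inter (measurableSet_lt ms measurable_const)))
  · exact (measurableSet_le measurable_const m0).inter ((measurableSet_lt m0 measurable_const).inter
      ((measurableSet_lt m1 measurable_const).inter (measurableSet_le measurable_const ms)))
  · exact (measurableSet_lt m0 measurable_const).inter ((measurableSet_le measurable_const m1).inter
      ((measurableSet_lt m1 measurable_const).inter (measurableSet_lt measurable_const md)))
  · exact (measurableSet_le measurable_const m0).inter ((measurableSet_le measurable_const m1).inter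
      ((measurableSet_lt m1 measurable_const).inter (measurableSet_le md measurable_const)))

lemma halfSq_disj (m1 n1 m2 n2 : ℤ) (hne : (m1, n1) ≠ (m2, n2)) (x : Plane)
    (h1 : x ∈ halfSq m1 n1) (h2 : x ∈ halfSq m2 n2) : False := by
  obtain ⟨a1, a2, a3, a4⟩ := h1; obtain ⟨b1, b2, b3, b4⟩ := h2
  have i1 : m1 < m2 + 1 := by
    have := lt_of_le_of_lt a1 b2; exact_mod_cast this
  have i2 : m2 < m1 + 1 := by
    have := lt_of_le_of_lt b1 a2; exact_mod_cast this
  have i3 : n1 < n2 + 1 := by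
    have := lt_of_le_of_lt a3 b4; exact_mod_cast this
  have i4 : n2 < n1 + 1 := by
    have := lt_of_le_of_lt b3 a4; exact_mod_cast this
  exact hne (by rw [show m1 = m2 by omega, show n1 = n2 by omega])

def pieceOf (a N : ℕ) (j : Fin N × Fin 5) : Set Plane :=
  pieces ((pz a (j.1:ℕ)).1 : ℝ) ((pz a (j.1:ℕ)).2 : ℝ) j.2

noncomputable def isoOf (a N : ℕ) (j : Fin N × Fin 5) : Plane ≃ᵢ Plane :=
  isos ((pz a (j.1:ℕ)).1 : ℝ) ((pz a (j.1:ℕ)).2 : ℝ) j.2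

lemma int_sandwich (u v : ℤ) (r : ℝ) (h1 : (u:ℝ) < r) (h2 : r < u+1)
    (h3 : (v:ℝ) < r) (h4 : r < v+1) : u = v := by
  have : (u:ℝ) < v+1 := lt_trans h1 h4
  have c1 : u < v+1 := by exact_mod_cast this
  have : (v:ℝ) < u+1 := lt_trans h3 h2
  have c2 : v < u+1 := by exact_mod_cast this
  omega


lemma sim_aux :
    IsSimilarity (fun y : Plane => pt ((y 0 - y 1)/2) ((y 0 + y 1)/2)) (1 / Real.sqrt 2) := by
  intro u v
  show dist (pt ((u 0 - u 1)/2) ((u 0 + u 1)/2)) (pt ((v 0 - v 1)/2) ((v 0 + v 1)/2))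
      = 1 / Real.sqrt 2 * dist u v
  rw [dist_pt, dist_pt]
  simp only [pt0, pt1]
  rw [show ((u 0 - u 1)/2 - (v 0 - v 1)/2)^2 + ((u 0 + u 1)/2 - (v 0 + v 1)/2)^2
      = ((u 0 - v 0)^2 + (u 1 - v 1)^2) * (2:ℝ)⁻¹ by ring]
  rw [Real.sqrt_mul (by positivity), Real.sqrt_inv]
  ring

lemma T_aux (a b : ℕ) (x : Plane) :
    (x ∈ (fun y : Plane => pt ((y 0 - y 1)/2) ((y 0 + y 1)/2)) ''
        (rect 0 ((a : ℝ) + 1) 0 1 ∪ rect 0 1 0 ((b : ℝ) + 1))) ↔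
      ((0 ≤ x 0 + x 1 ∧ x 0 + x 1 ≤ (a:ℝ)+1 ∧ 0 ≤ x 1 - x 0 ∧ x 1 - x 0 ≤ 1) ∨
       (0 ≤ x 0 + x 1 ∧ x 0 + x 1 ≤ 1 ∧ 0 ≤ x 1 - x 0 ∧ x 1 - x 0 ≤ (b:ℝ)+1)) := by
  constructor
  · rintro ⟨y, hy, rfl⟩
    simp only [pt0, pt1]
    rcases hy with ⟨u1, u2, u3, u4⟩ | ⟨u1, u2, u3, u4⟩
    · left; exact ⟨by linarith, by linarith, by linarith, by linarith⟩
    · right; exact ⟨by linarith, by linarith, by linarith, by linarith⟩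
  · intro h
    refine ⟨pt (x 0 + x 1) (x 1 - x 0), ?_, ?_⟩
    · rcases h with ⟨u1, u2, u3, u4⟩ | ⟨u1, u2, u3, u4⟩
      · left; exact ⟨u1, u2, u3, u4⟩
      · right; exact ⟨u1, u2, u3, u4⟩
    · show pt ((pt (x 0 + x 1) (x 1 - x 0) 0 - pt (x 0 + x 1) (x 1 - x 0) 1)/2)
          ((pt (x 0 + x 1) (x 1 - x 0) 0 + pt (x 0 + x 1) (x 1 - x 0) 1)/2) = x
      rw [pt0, pt1]
      rw [show ((x 0 + x 1) - (x 1 - x 0))/2 = x 0 by ring,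
          show ((x 0 + x 1) + (x 1 - x 0))/2 = x 1 by ring]
      exact pt_eta x


lemma fold_aux (a b : ℕ) (ha : 1 ≤ a) (hb : 1 ≤ b) :
    FoldsToTwoLevels (rect 0 ((a : ℝ) + 1) 0 1 ∪ rect 0 1 0 ((b : ℝ) + 1))
      ((fun y : Plane => pt ((y 0 - y 1)/2) ((y 0 + y 1)/2)) ''
        (rect 0 ((a : ℝ) + 1) 0 1 ∪ rect 0 1 0 ((b : ℝ) + 1))) := by
  refine ⟨(a+b+1)*5,
    (fun i => pieceOf a (a+b+1) (finProdFinEquiv.symm i)),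
    (fun i => isoOf a (a+b+1) (finProdFinEquiv.symm i)),
    ?_, ?_, ?_, ?_⟩
  · intro i
    exact pieces_meas _ _ _
  · -- pairwise disjoint
    intro i j hij
    refine measure_mono_null ?_ (measure_empty (μ := (volume : Measure Plane)) )
    rintro x ⟨hx1, hx2⟩
    exfalso
    have huv : finProdFinEquiv.symm i ≠ finProdFinEquiv.symm j :=
      fun h => hij (finProdFinEquiv.symm.injective h)
    by_cases hsq : pz a ((finProdFinEquiv.symm i).1 : ℕ) = pz a ((finProdFinEquiv.symm j).1 : ℕ)
    · have hfin : (finProdFinEquiv.symm i).1 = (finProdFinEquiv.symm j).1 :=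
        Fin.ext (pz_inj a _ _ hsq)
      have hst : (finProdFinEquiv.symm i).2 ≠ (finProdFinEquiv.symm j).2 :=
        fun h => huv (Prod.ext hfin h)
      have hx1' : x ∈ pieces ((pz a ((finProdFinEquiv.symm i).1:ℕ)).1:ℝ)
          ((pz a ((finProdFinEquiv.symm i).1:ℕ)).2:ℝ) (finProdFinEquiv.symm i).2 := hx1
      have hx2' : x ∈ pieces ((pz a ((finProdFinEquiv.symm j).1:ℕ)).1:ℝ)
          ((pz a ((finProdFinEquiv.symm j).1:ℕ)).2:ℝ) (finProdFinEquiv.symm j).2 := hx2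
      rw [← hfin] at hx2'
      exact pieces_disj _ _ _ _ hst x hx1' hx2'
    · exact halfSq_disj _ _ _ _ (by simpa using hsq) x
        (pieces_subset _ _ _ hx1) (pieces_subset _ _ _ hx2)
  · -- symmetric difference null
    have hUL : (⋃ i : Fin ((a+b+1)*5), pieceOf a (a+b+1) (finProdFinEquiv.symm i)) ⊆
        (rect 0 ((a:ℝ)+1) 0 1 ∪ rect 0 1 0 ((b:ℝ)+1)) := by
      apply Set.iUnion_subset
      intro i x hx
      obtain ⟨c1, c2, c3, c4⟩ := pieces_subset _ _ _ hx
      rcases pz_range a b ((finProdFinEquiv.symm i).1 : ℕ) (finProdFinEquiv.symm i).1.isLt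
        with ⟨g1, g2, g3⟩ | ⟨g1, g2, g3⟩
      · left
        have r1 : (0:ℝ) ≤ ((pz a ((finProdFinEquiv.symm i).1 : ℕ)).1 : ℝ) := by exact_mod_cast g1
        have r2 : ((pz a ((finProdFinEquiv.symm i).1 : ℕ)).1 : ℝ) ≤ (a:ℝ) := by exact_mod_cast g2
        have r3 : ((pz a ((finProdFinEquiv.symm i).1 : ℕ)).2 : ℝ) = 0 := by rw [g3]; simp
        exact ⟨by linarith, by linarith, by linarith, by linarith⟩
      · right
        have r1 : ((pz a ((finProdFinEquiv.symm i).1 : ℕ)).1 : ℝ) = 0 := by rw [g1]; simp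
        have r2 : (1:ℝ) ≤ ((pz a ((finProdFinEquiv.symm i).1 : ℕ)).2 : ℝ) := by exact_mod_cast g2
        have r3 : ((pz a ((finProdFinEquiv.symm i).1 : ℕ)).2 : ℝ) ≤ (b:ℝ) := by exact_mod_cast g3
        exact ⟨by linarith, by linarith, by linarith, by linarith⟩
    have hLU : (rect 0 ((a:ℝ)+1) 0 1 ∪ rect 0 1 0 ((b:ℝ)+1)) \
        (⋃ i : Fin ((a+b+1)*5), pieceOf a (a+b+1) (finProdFinEquiv.symm i)) ⊆
        ({x : Plane | (0:ℝ)*x 0 + 1*x 1 = 1} ∪ {x : Plane | (1:ℝ)*x 0 + 0*x 1 = (a:ℝ)+1} ∪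
         {x : Plane | (1:ℝ)*x 0 + 0*x 1 = 1} ∪ {x : Plane | (0:ℝ)*x 0 + 1*x 1 = (b:ℝ)+1}) := by
      rintro x ⟨hxL, hxU⟩
      by_contra hlines
      simp only [Set.mem_union, Set.mem_setOf_eq, not_or] at hlines
      obtain ⟨⟨⟨l1, l2⟩, l3⟩, l4⟩ := hlines
      have n1 : x 1 ≠ 1 := fun h => l1 (by linarith)
      have n2 : x 0 ≠ (a:ℝ)+1 := fun h => l2 (by linarith)
      have n3 : x 0 ≠ 1 := fun h => l3 (by linarith)
      have n4 : x 1 ≠ (b:ℝ)+1 := fun h => l4 (by linarith)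
      apply hxU
      have key : ∃ (k : ℕ) (hk : k < a+b+1), x ∈ halfSq ((pz a k).1:ℝ) ((pz a k).2:ℝ) := by
        rcases hxL with ⟨u1, u2, u3, u4⟩ | ⟨u1, u2, u3, u4⟩
        · have hx1 : x 1 < 1 := lt_of_le_of_ne u4 n1
          have hx0 : x 0 < (a:ℝ)+1 := lt_of_le_of_ne u2 n2
          have hm0 : 0 ≤ ⌊x 0⌋ := Int.floor_nonneg.mpr u1
          have hma : ⌊x 0⌋ ≤ (a:ℤ) := by
            have h1 : (⌊x 0⌋:ℝ) < (a:ℝ)+1 := lt_of_le_of_lt (Int.floor_le _) hx0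
            have h2 : ⌊x 0⌋ < (a:ℤ)+1 := by exact_mod_cast h1
            omega
          obtain ⟨k, hk, hpzk⟩ := pz_mem a b ⌊x 0⌋ 0 (Or.inl ⟨hm0, hma, rfl⟩)
          refine ⟨k, hk, ?_⟩
          rw [hpzk]
          exact ⟨Int.floor_le _, Int.lt_floor_add_one _, by push_cast; linarith,
            by push_cast; linarith⟩
        · have hx0 : x 0 < 1 := lt_of_le_of_ne u2 n3
          by_cases hx1' : x 1 < 1
          · obtain ⟨k, hk, hpzk⟩ := pz_mem a b 0 0 (Or.inl ⟨le_refl 0, by exact_mod_cast Nat.zero_le a, rfl⟩)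
            refine ⟨k, hk, ?_⟩
            rw [hpzk]
            exact ⟨by push_cast; linarith, by push_cast; linarith, by push_cast; linarith,
              by push_cast; linarith⟩
          · push_neg at hx1'
            have hxb : x 1 < (b:ℝ)+1 := lt_of_le_of_ne u4 n4
            have hn1 : 1 ≤ ⌊x 1⌋ := Int.le_floor.mpr (by simpa using hx1')
            have hnb : ⌊x 1⌋ ≤ (b:ℤ) := by
              have h1 : (⌊x 1⌋:ℝ) < (b:ℝ)+1 := lt_of_le_of_lt (Int.floor_le _) hxb
              have h2 : ⌊x 1⌋ < (b:ℤ)+1 := by exact_mod_cast h1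
              omega
            obtain ⟨k, hk, hpzk⟩ := pz_mem a b 0 ⌊x 1⌋ (Or.inr ⟨rfl, hn1, hnb⟩)
            refine ⟨k, hk, ?_⟩
            rw [hpzk]
            exact ⟨by push_cast; linarith, by push_cast; linarith, Int.floor_le _,
              Int.lt_floor_add_one _⟩
      obtain ⟨k, hk, hsq⟩ := key
      obtain ⟨s, hs⟩ := pieces_cover _ _ x hsq
      rw [Set.mem_iUnion]
      refine ⟨finProdFinEquiv ((⟨k, hk⟩ : Fin (a+b+1)), s), ?_⟩
      have hsymm : finProdFinEquiv.symm (finProdFinEquiv ((⟨k, hk⟩ : Fin (a+b+1)), s))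
          = ((⟨k, hk⟩ : Fin (a+b+1)), s) := Equiv.symm_apply_apply _ _
      rw [hsymm]
      exact hs
    rw [Set.symmDiff_def]
    apply measure_union_null
    · exact measure_mono_null (fun x hx => (hx.2 (hUL hx.1)).elim) measure_empty
    · exact measure_mono_null hLU
        (measure_union_null (measure_union_null (measure_union_null
          (line_null 0 1 1 (Or.inr one_ne_zero))
          (line_null 1 0 ((a:ℝ)+1) (Or.inl one_ne_zero)))
          (line_null 1 0 1 (Or.inl one_ne_zero)))
          (line_null 0 1 ((b:ℝ)+1) (Or.inr one_ne_zero)))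
  · -- a.e. count
    have hBadNull : volume (⋃ (k : ℤ),
        ({x : Plane | (2:ℝ)*x 0 + 0*x 1 = (k:ℝ)} ∪ {x : Plane | (0:ℝ)*x 0 + 2*x 1 = (k:ℝ)} ∪
         {x : Plane | (2:ℝ)*x 0 + 2*x 1 = (k:ℝ)} ∪ {x : Plane | (-2:ℝ)*x 0 + 2*x 1 = (k:ℝ)})) = 0 := by
      apply measure_iUnion_null
      intro k
      exact measure_union_null (measure_union_null (measure_union_null
        (line_null 2 0 k (Or.inl two_ne_zero)) (line_null 0 2 k (Or.inr two_ne_zero)))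
        (line_null 2 2 k (Or.inl two_ne_zero))) (line_null (-2) 2 k (Or.inl (by norm_num)))
    rw [MeasureTheory.ae_iff]
    refine measure_mono_null ?_ hBadNull
    intro x hx
    simp only [Set.mem_setOf_eq] at hx
    by_contra hxB
    apply hx
    simp only [Set.mem_iUnion, Set.mem_union, Set.mem_setOf_eq, not_exists, not_or] at hxB
    have h0 : ∀ k : ℤ, 2 * x 0 ≠ (k:ℝ) := fun k h => (hxB k).1.1.1 (by linarith)
    have h1 : ∀ k : ℤ, 2 * x 1 ≠ (k:ℝ) := fun k h => (hxB k).1.1.2 (by linarith)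
    have hS : ∀ k : ℤ, 2 * (x 0 + x 1) ≠ (k:ℝ) := fun k h => (hxB k).1.2 (by linarith)
    have hD : ∀ k : ℤ, 2 * (x 1 - x 0) ≠ (k:ℝ) := fun k h => (hxB k).2 (by linarith)
    simp only [Finset.card_filter]
    have hre : (∑ i : Fin ((a+b+1)*5), if x ∈ isoOf a (a+b+1) (finProdFinEquiv.symm i) ''
          pieceOf a (a+b+1) (finProdFinEquiv.symm i) then 1 else 0)
        = ∑ j : Fin (a+b+1) × Fin 5, if x ∈ isoOf a (a+b+1) j '' pieceOf a (a+b+1) j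
          then 1 else 0 :=
      Fintype.sum_equiv finProdFinEquiv.symm _ _ (fun i => rfl)
    have hmid : (∑ j : Fin (a+b+1) × Fin 5, if x ∈ isoOf a (a+b+1) j '' pieceOf a (a+b+1) j
          then 1 else 0)
        = ∑ i1 : Fin (a+b+1), if (((pz a (i1:ℕ)).1:ℝ) < x 0 + x 1 ∧
            x 0 + x 1 < ((pz a (i1:ℕ)).1:ℝ)+1 ∧ ((pz a (i1:ℕ)).2:ℝ) < x 1 - x 0 ∧
            x 1 - x 0 < ((pz a (i1:ℕ)).2:ℝ)+1) then 2 else 0 := by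
      rw [Fintype.sum_prod_type]
      exact Finset.sum_congr rfl
        (fun i1 _ => square_count (pz a (i1:ℕ)).1 (pz a (i1:ℕ)).2 x h0 h1 hS hD)
    rw [hre, hmid]
    have hXne : ∀ k : ℤ, x 0 + x 1 ≠ (k:ℝ) := fun k h => hS (2*k) (by push_cast; linarith)
    have hYne : ∀ k : ℤ, x 1 - x 0 ≠ (k:ℝ) := fun k h => hD (2*k) (by push_cast; linarith)
    by_cases hxT : x ∈ (fun y : Plane => pt ((y 0 - y 1)/2) ((y 0 + y 1)/2)) ''
        (rect 0 ((a:ℝ)+1) 0 1 ∪ rect 0 1 0 ((b:ℝ)+1))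
    · rw [if_pos hxT]
      suffices h : ∃ (m n : ℤ) (k : ℕ) (hk : k < a+b+1), pz a k = (m, n) ∧
          (m:ℝ) < x 0 + x 1 ∧ x 0 + x 1 < (m:ℝ)+1 ∧ (n:ℝ) < x 1 - x 0 ∧ x 1 - x 0 < (n:ℝ)+1 by
        obtain ⟨m, n, k, hk, hpzk, hm1, hm2, hn1, hn2⟩ := h
        refine Eq.trans (Finset.sum_eq_single_of_mem (⟨k, hk⟩ : Fin (a+b+1))
          (Finset.mem_univ _) ?_) ?_
        · intro j _ hji
          apply if_neg
          rintro ⟨c1, c2, c3, c4⟩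
          have hj1 : (pz a (j:ℕ)).1 = m := int_sandwich _ m _ c1 c2 hm1 hm2
          have hj2 : (pz a (j:ℕ)).2 = n := int_sandwich _ n _ c3 c4 hn1 hn2
          apply hji
          apply Fin.ext
          apply pz_inj a (j:ℕ) k
          rw [hpzk, ← hj1, ← hj2]
        · have hc : (((pz a ((⟨k, hk⟩ : Fin (a+b+1)) : ℕ)).1:ℝ) < x 0 + x 1 ∧
              x 0 + x 1 < ((pz a ((⟨k, hk⟩ : Fin (a+b+1)) : ℕ)).1:ℝ)+1 ∧
              ((pz a ((⟨k, hk⟩ : Fin (a+b+1)) : ℕ)).2:ℝ) < x 1 - x 0 ∧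
              x 1 - x 0 < ((pz a ((⟨k, hk⟩ : Fin (a+b+1)) : ℕ)).2:ℝ)+1) := by
            rw [show ((⟨k, hk⟩ : Fin (a+b+1)) : ℕ) = k from rfl, hpzk]
            exact ⟨hm1, hm2, hn1, hn2⟩
          rw [if_pos hc]
      rcases (T_aux a b x).mp hxT with ⟨u1, u2, u3, u4⟩ | ⟨u1, u2, u3, u4⟩
      · have hY0 : (0:ℝ) < x 1 - x 0 :=
          lt_of_le_of_ne u3 (Ne.symm (by have := hYne 0; push_cast at this; exact this))
        have hY1 : x 1 - x 0 < 1 :=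
          lt_of_le_of_ne u4 (by have := hYne 1; push_cast at this; exact this)
        have hX1 : x 0 + x 1 < (a:ℝ)+1 :=
          lt_of_le_of_ne u2 (by have := hXne ((a:ℤ)+1); push_cast at this; exact this)
        have hm0 : 0 ≤ ⌊x 0 + x 1⌋ := Int.floor_nonneg.mpr u1
        have hma : ⌊x 0 + x 1⌋ ≤ (a:ℤ) := by
          have h1 : (⌊x 0 + x 1⌋:ℝ) < (a:ℝ)+1 := lt_of_le_of_lt (Int.floor_le _) hX1
          have h2 : ⌊x 0 + x 1⌋ < (a:ℤ)+1 := by exact_mod_cast h1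
          omega
        obtain ⟨k, hk, hpzk⟩ := pz_mem a b ⌊x 0 + x 1⌋ 0 (Or.inl ⟨hm0, hma, rfl⟩)
        exact ⟨⌊x 0 + x 1⌋, 0, k, hk, hpzk,
          lt_of_le_of_ne (Int.floor_le _) (Ne.symm (hXne _)), Int.lt_floor_add_one _,
          by push_cast; linarith, by push_cast; linarith⟩
      · have hX1 : x 0 + x 1 < 1 :=
          lt_of_le_of_ne u2 (by have := hXne 1; push_cast at this; exact this)
        have hX0 : (0:ℝ) < x 0 + x 1 :=
          lt_of_le_of_ne u1 (Ne.symm (by have := hXne 0; push_cast at this; exact this))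
        have hY1ne : x 1 - x 0 ≠ (1:ℝ) := by have := hYne 1; push_cast at this; exact this
        rcases lt_or_gt_of_ne hY1ne with hY | hY
        · have hY0 : (0:ℝ) < x 1 - x 0 :=
            lt_of_le_of_ne u3 (Ne.symm (by have := hYne 0; push_cast at this; exact this))
          obtain ⟨k, hk, hpzk⟩ := pz_mem a b 0 0
            (Or.inl ⟨le_refl 0, by exact_mod_cast Nat.zero_le a, rfl⟩)
          exact ⟨0, 0, k, hk, hpzk, by push_cast; linarith, by push_cast; linarith,
            by push_cast; linarith, by push_cast; linarith⟩
        · have hYb : x 1 - x 0 < (b:ℝ)+1 :=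
            lt_of_le_of_ne u4 (by have := hYne ((b:ℤ)+1); push_cast at this; exact this)
          have hn1 : 1 ≤ ⌊x 1 - x 0⌋ := Int.le_floor.mpr (by push_cast; linarith)
          have hnb : ⌊x 1 - x 0⌋ ≤ (b:ℤ) := by
            have h1 : (⌊x 1 - x 0⌋:ℝ) < (b:ℝ)+1 := lt_of_le_of_lt (Int.floor_le _) hYb
            have h2 : ⌊x 1 - x 0⌋ < (b:ℤ)+1 := by exact_mod_cast h1
            omega
          obtain ⟨k, hk, hpzk⟩ := pz_mem a b 0 ⌊x 1 - x 0⌋ (Or.inr ⟨rfl, hn1, hnb⟩)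
          exact ⟨0, ⌊x 1 - x 0⌋, k, hk, hpzk, by push_cast; linarith, by push_cast; linarith,
            lt_of_le_of_ne (Int.floor_le _) (Ne.symm (hYne _)), Int.lt_floor_add_one _⟩
    · rw [if_neg hxT]
      apply Finset.sum_eq_zero
      intro j _
      apply if_neg
      rintro ⟨c1, c2, c3, c4⟩
      apply hxT
      apply (T_aux a b x).mpr
      rcases pz_range a b (j:ℕ) j.isLt with ⟨g1, g2, g3⟩ | ⟨g1, g2, g3⟩
      · left
        have r1 : (0:ℝ) ≤ ((pz a (j:ℕ)).1 : ℝ) := by exact_mod_cast g1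
        have r2 : ((pz a (j:ℕ)).1 : ℝ) ≤ (a:ℝ) := by exact_mod_cast g2
        have r3 : ((pz a (j:ℕ)).2 : ℝ) = 0 := by rw [g3]; simp
        exact ⟨by linarith, by linarith, by linarith, by linarith⟩
      · right
        have r1 : ((pz a (j:ℕ)).1 : ℝ) = 0 := by rw [g1]; simp
        have r2 : (1:ℝ) ≤ ((pz a (j:ℕ)).2 : ℝ) := by exact_mod_cast g2
        have r3 : ((pz a (j:ℕ)).2 : ℝ) ≤ (b:ℝ) := by exact_mod_cast g3
        exact ⟨by linarith, by linarith, by linarith, by linarith⟩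


/-- An L-shaped polyomino (one HV-square, a horizontal appendage of length `a` and a
vertical appendage of length `b`) folds to two levels onto a `1/√2`-scaled copy of itself. -/
theorem L_shape_folds_to_two_levels (a b : ℕ) (ha : 1 ≤ a) (hb : 1 ≤ b) :
    ∃ σ : Plane → Plane, IsSimilarity σ (1 / Real.sqrt 2) ∧
      FoldsToTwoLevels (rect 0 ((a : ℝ) + 1) 0 1 ∪ rect 0 1 0 ((b : ℝ) + 1))
        (σ '' (rect 0 ((a : ℝ) + 1) 0 1 ∪ rect 0 1 0 ((b : ℝ) + 1))) := by
  exact ⟨fun y : Plane => pt ((y 0 - y 1)/2) ((y 0 + y 1)/2), sim_aux, fold_aux a b ha hb⟩
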